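/- Let M = A + B ∈ Mat_n(K) with A² = A, B² = 0, and suppose M and M − I are both invertible. Then n = 2p is even and M is similar to a block matrix [[I_p, D],[I_p, 0_p]] for some p×p matrix D. -/

import Mathlib

open Matrix Module Submodule

theorem stmt_10 {K : Type*} [Field K] {n : ℕ} (M A B : Matrix (Fin n) (Fin n) K)
    (hM : M = A + B) (hA : A ^ 2 = A) (hB : B ^ 2 = 0)
    (h1 : IsUnit M) (h2 : IsUnit (M - 1)) :
    ∃ (p : ℕ) (h : n = p + p) (D : Matrix (Fin p) (Fin p) K)
      (R : Matrix (Fin n) (Fin n) K), IsUnit R ∧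
      M = R * (Matrix.reindex (finSumFinEquiv.trans (finCongr h.symm))
        (finSumFinEquiv.trans (finCongr h.symm))
        (Matrix.fromBlocks 1 D 1 0)) * R⁻¹ := by
  classical
  -- pointwise consequences of the hypotheses
  have hAA : ∀ x, A.mulVec (A.mulVec x) = A.mulVec x := by
    intro x
    rw [Matrix.mulVec_mulVec, ← pow_two, hA]
  have hBB : ∀ x, B.mulVec (B.mulVec x) = 0 := by
    intro x
    rw [Matrix.mulVec_mulVec, ← pow_two, hB, Matrix.zero_mulVec]
  have hMx : ∀ x, M.mulVec x = A.mulVec x + B.mulVec x := by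
    intro x; rw [hM, Matrix.add_mulVec]
  have hMinj : ∀ x : Fin n → K, M.mulVec x = 0 → x = 0 := by
    intro x hx
    have h := Matrix.nonsing_inv_mul M ((Matrix.isUnit_iff_isUnit_det M).mp h1)
    calc x = (M⁻¹ * M).mulVec x := by rw [h, Matrix.one_mulVec]
    _ = M⁻¹.mulVec (M.mulVec x) := by rw [← Matrix.mulVec_mulVec]
    _ = 0 := by rw [hx, Matrix.mulVec_zero]
  have hM1inj : ∀ x : Fin n → K, M.mulVec x = x → x = 0 := by
    intro x hx
    have h := Matrix.nonsing_inv_mul (M - 1) ((Matrix.isUnit_iff_isUnit_det (M-1)).mp h2)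
    have hx' : (M - 1).mulVec x = 0 := by
      rw [Matrix.sub_mulVec, hx, Matrix.one_mulVec, sub_self]
    calc x = ((M - 1)⁻¹ * (M - 1)).mulVec x := by rw [h, Matrix.one_mulVec]
    _ = (M - 1)⁻¹.mulVec ((M - 1).mulVec x) := by rw [← Matrix.mulVec_mulVec]
    _ = 0 := by rw [hx', Matrix.mulVec_zero]
  -- key "injectivity" facts
  have fact_a : ∀ x : Fin n → K, B.mulVec x = 0 → A.mulVec x = 0 → x = 0 := by
    intro x hb ha
    exact hMinj x (by rw [hMx, ha, hb, add_zero])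
  have fact_b : ∀ x : Fin n → K, B.mulVec x = 0 → A.mulVec x = x → x = 0 := by
    intro x hb ha
    exact hM1inj x (by rw [hMx, ha, hb, add_zero])
  have fact_fix : ∀ x ∈ LinearMap.range A.mulVecLin, A.mulVec x = x := by
    rintro _ ⟨y, rfl⟩
    simpa [Matrix.mulVecLin_apply] using hAA y
  have fact_c : ∀ x ∈ LinearMap.range A.mulVecLin, B.mulVec x = 0 → x = 0 := by
    intro x hx hb
    exact fact_b x hb (fact_fix x hx)
  -- subspaces
  set UA := LinearMap.range A.mulVecLin with hUA
  set KA := LinearMap.ker A.mulVecLin with hKA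
  set KB := LinearMap.ker B.mulVecLin with hKB
  set RB := LinearMap.range B.mulVecLin with hRB
  have hRBKB : RB ≤ KB := by
    rintro _ ⟨y, rfl⟩
    simp only [hKB, LinearMap.mem_ker, Matrix.mulVecLin_apply]
    exact hBB y
  -- dimension bounds
  have hfin : finrank K (Fin n → K) = n := Module.finrank_fin_fun K
  -- φ : KB → UA injective
  have hkr : finrank K KB ≤ finrank K UA := by
    let φ : KB →ₗ[K] UA :=
      ((A.mulVecLin.domRestrict KB).codRestrict UA (fun x => ⟨x, rfl⟩))
    have hφ : Function.Injective φ := by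
      rintro ⟨x, hx⟩ ⟨y, hy⟩ h
      have h0 : A.mulVecLin x = A.mulVecLin y := congrArg Subtype.val h
      apply Subtype.ext
      have hb : B.mulVec (x - y) = 0 := by
        have hx' : B.mulVec x = 0 := hx
        have hy' : B.mulVec y = 0 := hy
        rw [Matrix.mulVec_sub, hx', hy', sub_self]
      have ha : A.mulVec (x - y) = 0 := by
        rw [Matrix.mulVec_sub]
        have h0' : A.mulVec x = A.mulVec y := by
          simpa [Matrix.mulVecLin_apply] using h0
        rw [h0', sub_self]
      have := fact_a (x - y) hb ha
      exact sub_eq_zero.mp this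
    exact LinearMap.finrank_le_finrank_of_injective hφ
  have hkka : finrank K KB ≤ finrank K KA := by
    let ψ : KB →ₗ[K] KA :=
      (((LinearMap.id : (Fin n → K) →ₗ[K] (Fin n → K)) - A.mulVecLin).domRestrict KB).codRestrict
        KA (fun x => by
          simp only [hKA, LinearMap.mem_ker, LinearMap.domRestrict_apply, LinearMap.sub_apply,
            LinearMap.id_apply, map_sub, Matrix.mulVecLin_apply]
          rw [hAA]; exact sub_self _)
    have hψ : Function.Injective ψ := by
      rintro ⟨x, hx⟩ ⟨y, hy⟩ h
      have h0 : x - A.mulVecLin x = y - A.mulVecLin y := congrArg Subtype.val h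
      apply Subtype.ext
      have hb : B.mulVec (x - y) = 0 := by
        have hx' : B.mulVec x = 0 := hx
        have hy' : B.mulVec y = 0 := hy
        rw [Matrix.mulVec_sub, hx', hy', sub_self]
      have ha : A.mulVec (x - y) = x - y := by
        have h1' : x - y = A.mulVecLin x - A.mulVecLin y :=
          (sub_eq_sub_iff_sub_eq_sub).mp h0
        rw [Matrix.mulVec_sub]
        exact (by simpa [Matrix.mulVecLin_apply] using h1'.symm)
      have := fact_b (x - y) hb ha
      exact sub_eq_zero.mp this
    exact LinearMap.finrank_le_finrank_of_injective hψ
  have hrn : finrank K UA + finrank K KA = n := by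
    have h := LinearMap.finrank_range_add_finrank_ker A.mulVecLin
    rwa [hfin] at h
  have hbn : finrank K RB + finrank K KB = n := by
    have h := LinearMap.finrank_range_add_finrank_ker B.mulVecLin
    rwa [hfin] at h
  have hble : finrank K RB ≤ finrank K KB := Submodule.finrank_mono hRBKB
  set p := finrank K KB with hp
  have hpn : n = p + p := by omega
  have hrp : finrank K UA = p := by omega
  -- handle n = 0 separately
  rcases Nat.eq_zero_or_pos p with hp0 | hppos
  · refine ⟨p, hpn, 0, 1, isUnit_one, ?_⟩
    have hn0 : n = 0 := by omega
    subst hn0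
    ext i j
    exact absurd i.2 (by omega)
  have : Nonempty (Fin p) := ⟨⟨0, hppos⟩⟩
  -- the basis of UA and the vectors
  let bu : Basis (Fin p) K UA := Module.finBasisOfFinrankEq K UA hrp
  let ui : Fin p → (Fin n → K) := fun i => (bu i : Fin n → K)
  let vi : Fin p → (Fin n → K) := fun i => B.mulVec (ui i)
  have hui_mem : ∀ i, ui i ∈ UA := fun i => (bu i).2
  have hvi_kb : ∀ i, vi i ∈ KB := by
    intro i
    simp only [hKB, LinearMap.mem_ker, Matrix.mulVecLin_apply, vi]
    exact hBB (ui i)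
  have hui_comp : ui = UA.subtype ∘ bu := rfl
  have span_ui : span K (Set.range ui) = UA := by
    rw [hui_comp, Set.range_comp, ← Submodule.map_span, Basis.span_eq, Submodule.map_top,
      Submodule.range_subtype]
  have hdisj : Disjoint UA KB := by
    rw [Submodule.disjoint_def]
    intro x hx hx'
    exact fact_c x hx hx'
  have li_u : LinearIndependent K ui := by
    rw [hui_comp]
    exact bu.linearIndependent.map' UA.subtype UA.ker_subtype
  have li_v : LinearIndependent K vi := by
    have : vi = B.mulVecLin ∘ ui := by
      funext i; simp [vi, Matrix.mulVecLin_apply]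
    rw [this]
    refine li_u.map ?_
    rw [span_ui, ← hKB]
    exact hdisj
  have span_vi_le : span K (Set.range vi) ≤ KB := by
    rw [Submodule.span_le]
    rintro _ ⟨i, rfl⟩
    exact hvi_kb i
  have li : LinearIndependent K (Sum.elim ui vi) := by
    refine li_u.sum_type li_v ?_
    rw [span_ui]
    exact hdisj.mono_right span_vi_le
  have hcard : Fintype.card (Fin p ⊕ Fin p) = finrank K (Fin n → K) := by
    simp [hfin, hpn.symm]
  let w : Basis (Fin p ⊕ Fin p) K (Fin n → K) :=
    basisOfLinearIndependentOfCardEqFinrank li hcard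
  have hw : ⇑w = Sum.elim ui vi := coe_basisOfLinearIndependentOfCardEqFinrank li hcard
  -- the matrix D
  have hMv_mem : ∀ j, A.mulVec (vi j) ∈ UA := fun j => ⟨vi j, rfl⟩
  let D : Matrix (Fin p) (Fin p) K := fun i j => bu.repr ⟨A.mulVec (vi j), hMv_mem j⟩ i
  -- key equations
  have keyu : ∀ j, M.mulVec (ui j) = ui j + vi j := by
    intro j
    rw [hMx, fact_fix (ui j) (hui_mem j)]
  have keyv : ∀ j, M.mulVec (vi j) = ∑ i, D i j • ui i := by
    intro j
    have h1' : M.mulVec (vi j) = A.mulVec (vi j) := by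
      rw [hMx]
      have : B.mulVec (vi j) = 0 := hvi_kb j
      rw [this, add_zero]
    rw [h1']
    have hsr := bu.sum_repr ⟨A.mulVec (vi j), hMv_mem j⟩
    have hcoe := congrArg (Subtype.val) hsr
    calc A.mulVec (vi j)
        = ((⟨A.mulVec (vi j), hMv_mem j⟩ : UA) : Fin n → K) := rfl
      _ = ((∑ i, bu.repr ⟨A.mulVec (vi j), hMv_mem j⟩ i • bu i : UA) : Fin n → K) := by
          rw [hsr]
      _ = ∑ i, D i j • ui i := by
          rw [Submodule.coe_sum]; rfl
  -- compute toMatrix w w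
  set f := M.mulVecLin with hf
  have hCmat : LinearMap.toMatrix w w f = Matrix.fromBlocks 1 D 1 0 := by
    ext i j
    rw [LinearMap.toMatrix_apply]
    cases j with
    | inl j =>
      have : f (w (Sum.inl j)) = w (Sum.inl j) + w (Sum.inr j) := by
        rw [hw]; simpa [hf, Matrix.mulVecLin_apply] using keyu j
      rw [this, map_add, Basis.repr_self, Basis.repr_self]
      cases i with
      | inl i => simp [Matrix.fromBlocks, Finsupp.single_apply, Matrix.one_apply, eq_comm]
      | inr i => simp [Matrix.fromBlocks, Finsupp.single_apply, Matrix.one_apply, eq_comm]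
    | inr j =>
      have : f (w (Sum.inr j)) = ∑ i', D i' j • w (Sum.inl i') := by
        rw [hw]; simpa [hf, Matrix.mulVecLin_apply] using keyv j
      rw [this, map_sum]
      cases i with
      | inl i =>
        simp [Basis.repr_self, Finsupp.single_apply, Matrix.fromBlocks]
      | inr i =>
        simp [Basis.repr_self, Finsupp.single_apply, Matrix.fromBlocks]
  -- reindex
  set σ : (Fin p ⊕ Fin p) ≃ Fin n := finSumFinEquiv.trans (finCongr hpn.symm) with hσ
  let w' : Basis (Fin n) K (Fin n → K) := w.reindex σ
  have hC' : LinearMap.toMatrix w' w' f =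
      Matrix.reindex σ σ (Matrix.fromBlocks 1 D 1 0) := by
    ext i j
    rw [LinearMap.toMatrix_apply, Matrix.reindex_apply, Matrix.submatrix_apply, ← hCmat,
      LinearMap.toMatrix_apply]
    simp [w', Basis.repr_reindex_apply]
  -- change of basis
  let e : Basis (Fin n) K (Fin n → K) := Pi.basisFun K (Fin n)
  set R := e.toMatrix w' with hR
  set R' := w'.toMatrix e with hR'
  have hRR' : R * R' = 1 := Basis.toMatrix_mul_toMatrix_flip e w'
  have hR'R : R' * R = 1 := Basis.toMatrix_mul_toMatrix_flip w' e
  have hRunit : IsUnit R := ⟨⟨R, R', hRR', hR'R⟩, rfl⟩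
  have hRinv : R⁻¹ = R' := Matrix.inv_eq_right_inv hRR'
  have hMe : LinearMap.toMatrix e e f = M := by
    rw [show e = Pi.basisFun K (Fin n) from rfl, LinearMap.toMatrix_eq_toMatrix', hf,
      ← Matrix.toLin'_apply', LinearMap.toMatrix'_toLin']
  have key : M = R * Matrix.reindex σ σ (Matrix.fromBlocks 1 D 1 0) * R' := by
    rw [← hC', ← hMe, hR, hR']
    exact (basis_toMatrix_mul_linearMap_toMatrix_mul_basis_toMatrix e w' e w' f).symm
  exact ⟨p, hpn, D, R, hRunit, by rw [hRinv]; exact key⟩
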